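/- For any number of agents n, any number of items m, any positive weights (w_1,...,w_n), and any nonnegative additive utilities, the allocation returned by the weighted picking sequence algorithm (for any tie-breaking rule) is weighted envy-free up to one item (WEF1). -/

import Mathlib

open Finset

/-- `pickCount picker i s` is the number of picks made by agent `i` among the first `s` steps. -/
def pickCount {n m : ℕ} (picker : Fin m → Fin n) (i : Fin n) (s : ℕ) : ℕ :=
  (Finset.univ.filter fun s' : Fin m => (s' : ℕ) < s ∧ picker s' = i).card

/-- A run of the weighted picking sequence algorithm (for an arbitrary tie-breaking rule):
at step `s`, agent `picker s` picks item `item s`.  The picking agent must minimize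
`t_i / w_i` among all agents, and the picked item must maximize her utility among the
items that have not been picked at earlier steps. -/
structure IsWPSRun {n m : ℕ} (w : Fin n → ℝ) (u : Fin n → Fin m → ℝ)
    (picker : Fin m → Fin n) (item : Fin m → Fin m) : Prop where
  item_inj : Function.Injective item
  min_ratio : ∀ s : Fin m, ∀ j : Fin n,
    (pickCount picker (picker s) (s : ℕ) : ℝ) / w (picker s)
      ≤ (pickCount picker j (s : ℕ) : ℝ) / w j
  best_item : ∀ s g : Fin m, (∀ s' : Fin m, (s' : ℕ) < (s : ℕ) → item s' ≠ g) →
    u (picker s) g ≤ u (picker s) (item s)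

/-- The bundle received by agent `i` in a run of the weighted picking sequence algorithm. -/
def runBundle {n m : ℕ} (picker : Fin m → Fin n) (item : Fin m → Fin m) (i : Fin n) :
    Finset (Fin m) :=
  (Finset.univ.filter fun s : Fin m => picker s = i).image item

/-- An allocation `A` is weighted envy-free up to one item (WEF1): for all agents `i, j`
with `A j` nonempty, there exists `g ∈ A j` with
`u_i(A_i)/w_i ≥ u_i(A_j \ {g})/w_j`. -/
def IsWEF1 {n m : ℕ} (w : Fin n → ℝ) (u : Fin n → Fin m → ℝ)
    (A : Fin n → Finset (Fin m)) : Prop :=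
  ∀ i j : Fin n, (A j).Nonempty →
    ∃ g ∈ A j, (∑ g' ∈ (A j).erase g, u i g') / w j ≤ (∑ g' ∈ A i, u i g') / w i

lemma card_filter_univ_lt {k : ℕ} (ℓ : Fin k) :
    (univ.filter fun q : Fin k => q < ℓ).card = (ℓ : ℕ) := by
  have h : (univ.filter fun q : Fin k => q < ℓ) = Finset.Iio ℓ := by ext q; simp
  rw [h]; simp

lemma filter_lt_card_eq {m : ℕ} (S : Finset (Fin m)) (x : Fin m) :
    (S.filter fun y => y < x).card
      = (univ.filter fun q : Fin S.card => (S.orderIsoOfFin rfl q : Fin m) < x).card := by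
  set e := S.orderIsoOfFin rfl with he
  symm
  apply Finset.card_bij (fun q _ => (e q : Fin m))
  · intro q hq
    simp only [mem_filter, mem_univ, true_and] at hq ⊢
    exact ⟨(e q).2, hq⟩
  · intro a _ b _ hab
    have : (e a : ↥S) = e b := Subtype.ext hab
    exact e.injective this
  · intro y hy
    simp only [mem_filter] at hy
    refine ⟨e.symm ⟨y, hy.1⟩, ?_, ?_⟩
    · simp only [mem_filter, mem_univ, true_and, OrderIso.apply_symm_apply]
      exact hy.2
    · simp [OrderIso.apply_symm_apply]

lemma orderIso_lt_of_lt_card {m : ℕ} (S : Finset (Fin m)) (x : Fin m) (p : Fin S.card)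
    (hp : (p : ℕ) < (S.filter fun y => y < x).card) :
    (S.orderIsoOfFin rfl p : Fin m) < x := by
  rw [filter_lt_card_eq] at hp
  set e := S.orderIsoOfFin rfl with he
  by_contra h
  push_neg at h
  have hsub : (univ.filter fun q : Fin S.card => (e q : Fin m) < x)
      ⊆ (univ.filter fun q : Fin S.card => q < p) := by
    intro q hq
    simp only [mem_filter, mem_univ, true_and] at hq ⊢
    have h1 : (e q : Fin m) < (e p : Fin m) := lt_of_lt_of_le hq h
    have h2 : (e q : ↥S) < e p := Subtype.coe_lt_coe.mp h1
    exact e.lt_iff_lt.mp h2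
  have := Finset.card_le_card hsub
  rw [card_filter_univ_lt] at this
  omega

/-- For any number of agents, items, positive weights, and nonnegative additive utilities,
the allocation returned by the weighted picking sequence algorithm (for any tie-breaking
rule) is WEF1. -/
theorem wps_is_WEF1 {n m : ℕ} (w : Fin n → ℝ) (hw : ∀ i, 0 < w i)
    (u : Fin n → Fin m → ℝ) (hu : ∀ i g, 0 ≤ u i g)
    (picker : Fin m → Fin n) (item : Fin m → Fin m)
    (hrun : IsWPSRun w u picker item) :
    IsWEF1 w u (runBundle picker item) := by
  intro i j hnej
  set Sj : Finset (Fin m) := univ.filter fun s => picker s = j with hSj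
  set Si : Finset (Fin m) := univ.filter fun s => picker s = i with hSi
  have hRBj : runBundle picker item j = Sj.image item := by rw [hSj]; rfl
  have hRBi : runBundle picker item i = Si.image item := by rw [hSi]; rfl
  have hk0 : 0 < Sj.card := by
    rw [hRBj] at hnej
    exact Finset.card_pos.mpr (Finset.image_nonempty.mp hnej)
  set e := Sj.orderIsoOfFin rfl with he
  set σ := Si.orderIsoOfFin rfl with hσ
  -- pickCount in terms of filters
  have pickCount_eq : ∀ (a : Fin n) (x : Fin m),
      pickCount picker a (x : ℕ)
        = ((univ.filter fun s => picker s = a).filter fun y => y < x).card := by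
    intro a x
    unfold pickCount
    rw [Finset.filter_filter]
    congr 1
    ext s'
    simp only [mem_filter, mem_univ, true_and]
    constructor
    · rintro ⟨h1, h2⟩; exact ⟨h2, h1⟩
    · rintro ⟨h1, h2⟩; exact ⟨h2, h1⟩
  -- value functions
  set V : ℕ → ℝ := fun r =>
    if h : r < Sj.card then u i (item ((e ⟨r, h⟩ : ↥Sj) : Fin m)) else 0 with hV
  set Y : ℕ → ℝ := fun p =>
    if h : p < Si.card then u i (item ((σ ⟨p, h⟩ : ↥Si) : Fin m)) else 0 with hY
  set C : ℕ → ℕ := fun t =>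
    if h : t < Sj.card then pickCount picker i (((e ⟨t, h⟩ : ↥Sj) : Fin m) : ℕ)
    else Si.card with hC
  set M : ℕ → ℝ := fun t =>
    (insert (0:ℝ) ((Finset.Ico t Sj.card).image V)).max' (insert_nonempty _ _) with hM
  have hV0 : ∀ r, 0 ≤ V r := by
    intro r; rw [hV]; dsimp only; split
    · exact hu i _
    · exact le_refl 0
  have hY0 : ∀ p, 0 ≤ Y p := by
    intro p; rw [hY]; dsimp only; split
    · exact hu i _
    · exact le_refl 0
  have hM0 : ∀ t, 0 ≤ M t := by
    intro t; rw [hM]; exact Finset.le_max' _ 0 (mem_insert_self _ _)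
  have hVM : ∀ t r, t ≤ r → r < Sj.card → V r ≤ M t := by
    intro t r h1 h2
    rw [hM]
    exact Finset.le_max' _ _ (mem_insert_of_mem
      (mem_image_of_mem _ (mem_Ico.mpr ⟨h1, h2⟩)))
  have hMant : ∀ t, M (t+1) ≤ M t := by
    intro t
    rw [hM]
    apply Finset.max'_le
    intro y hy
    rcases mem_insert.mp hy with rfl | hy
    · exact hM0 t
    · obtain ⟨r, hr, rfl⟩ := mem_image.mp hy
      rw [mem_Ico] at hr
      exact hVM t r (by omega) hr.2
  have hCeq : ∀ (t : ℕ) (h : t < Sj.card),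
      C t = (Si.filter fun y => y < ((e ⟨t, h⟩ : ↥Sj) : Fin m)).card := by
    intro t h
    rw [hC]; dsimp only; rw [dif_pos h, pickCount_eq, ← hSi]
  have hCT : ∀ t, C t ≤ Si.card := by
    intro t
    by_cases h : t < Sj.card
    · rw [hCeq t h]; exact Finset.card_le_card (Finset.filter_subset _ _)
    · rw [hC]; dsimp only; rw [dif_neg h]
  have hCmono : ∀ t r, t ≤ r → r < Sj.card → C t ≤ C r := by
    intro t r h1 h2
    have ht : t < Sj.card := lt_of_le_of_lt h1 h2
    rw [hCeq t ht, hCeq r h2]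
    apply Finset.card_le_card
    apply Finset.monotone_filter_right
    intro y _ hy
    refine lt_of_lt_of_le hy ?_
    have : (e ⟨t, ht⟩ : ↥Sj) ≤ e ⟨r, h2⟩ := e.le_iff_le.mpr (by exact Fin.mk_le_mk.mpr h1)
    exact Subtype.coe_le_coe.mpr this
  have hPCj : ∀ (t : ℕ) (h : t < Sj.card),
      pickCount picker j (((e ⟨t, h⟩ : ↥Sj) : Fin m) : ℕ) = t := by
    intro t h
    rw [pickCount_eq, ← hSj, filter_lt_card_eq, ← he]
    have heq : (univ.filter fun q : Fin Sj.card => (e q : Fin m) < ((e ⟨t, h⟩ : ↥Sj) : Fin m))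
        = univ.filter fun q : Fin Sj.card => q < ⟨t, h⟩ := by
      ext q
      simp only [mem_filter, mem_univ, true_and]
      constructor
      · intro hq; exact e.lt_iff_lt.mp (Subtype.coe_lt_coe.mp hq)
      · intro hq; exact Subtype.coe_lt_coe.mpr (e.lt_iff_lt.mpr hq)
    rw [heq, card_filter_univ_lt]
  have hF1 : ∀ (t : ℕ) (h : t < Sj.card), (t : ℝ) / w j ≤ (C t : ℝ) / w i := by
    intro t h
    have hmem : picker ((e ⟨t, h⟩ : ↥Sj) : Fin m) = j :=
      (Finset.mem_filter.mp (e ⟨t, h⟩).2).2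
    have hmr := hrun.min_ratio ((e ⟨t, h⟩ : ↥Sj) : Fin m) i
    rw [hmem, hPCj t h] at hmr
    have : C t = pickCount picker i (((e ⟨t, h⟩ : ↥Sj) : Fin m) : ℕ) := by
      rw [hC]; dsimp only; rw [dif_pos h]
    rw [this]
    exact hmr
  have hF2 : ∀ (r : ℕ) (hr : r < Sj.card) (p : ℕ), p < C r → V r ≤ Y p := by
    intro r hr p hp
    have hpT : p < Si.card := lt_of_lt_of_le hp (hCT r)
    have hp' : p < (Si.filter fun y => y < ((e ⟨r, hr⟩ : ↥Sj) : Fin m)).card := by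
      rw [← hCeq r hr]; exact hp
    have hlt : ((σ ⟨p, hpT⟩ : ↥Si) : Fin m) < ((e ⟨r, hr⟩ : ↥Sj) : Fin m) := by
      have := orderIso_lt_of_lt_card Si ((e ⟨r, hr⟩ : ↥Sj) : Fin m) ⟨p, hpT⟩ hp'
      rw [← hσ] at this
      exact this
    have hav : ∀ s' : Fin m, (s' : ℕ) < (((σ ⟨p, hpT⟩ : ↥Si) : Fin m) : ℕ) →
        item s' ≠ item ((e ⟨r, hr⟩ : ↥Sj) : Fin m) := by
      intro s' hs' heq
      have := hrun.item_inj heq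
      subst this
      have : (((e ⟨r, hr⟩ : ↥Sj) : Fin m) : ℕ) < (((σ ⟨p, hpT⟩ : ↥Si) : Fin m) : ℕ) := hs'
      have h2 : (((σ ⟨p, hpT⟩ : ↥Si) : Fin m) : ℕ) < (((e ⟨r, hr⟩ : ↥Sj) : Fin m) : ℕ) := hlt
      omega
    have hb := hrun.best_item ((σ ⟨p, hpT⟩ : ↥Si) : Fin m) (item ((e ⟨r, hr⟩ : ↥Sj) : Fin m)) hav
    have hpsi : picker ((σ ⟨p, hpT⟩ : ↥Si) : Fin m) = i :=
      (Finset.mem_filter.mp (σ ⟨p, hpT⟩).2).2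
    rw [hpsi] at hb
    rw [hV, hY]; dsimp only; rw [dif_pos hr, dif_pos hpT]
    exact hb
  have hYM : ∀ (t : ℕ), t < Sj.card → ∀ p : ℕ, p < C t → M t ≤ Y p := by
    intro t ht p hp
    rw [hM]
    apply Finset.max'_le
    intro y hy
    rcases mem_insert.mp hy with rfl | hy
    · exact hY0 p
    · obtain ⟨r, hr, rfl⟩ := mem_image.mp hy
      rw [mem_Ico] at hr
      exact hF2 r hr.2 p (lt_of_lt_of_le hp (hCmono t r hr.1 hr.2))
  -- main invariant
  have key : ∀ t : ℕ, t < Sj.card →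
      (∑ r ∈ Finset.Ico 1 (t+1), V r) / w j
        + ((C t : ℝ) / w i - (t : ℝ) / w j) * M t
      ≤ (∑ p ∈ Finset.range (C t), Y p) / w i := by
    intro t
    induction t with
    | zero =>
      intro h
      have hsum : (C 0 : ℝ) * M 0 ≤ ∑ p ∈ Finset.range (C 0), Y p := by
        have := Finset.card_nsmul_le_sum (Finset.range (C 0)) Y (M 0)
          (fun p hp => hYM 0 h p (mem_range.mp hp))
        simpa [nsmul_eq_mul] using this
      simp only [Finset.Ico_self, Finset.sum_empty, Nat.cast_zero, zero_div, sub_zero, zero_add]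
      calc (C 0 : ℝ) / w i * M 0 = (C 0 : ℝ) * M 0 / w i := by ring
        _ ≤ (∑ p ∈ Finset.range (C 0), Y p) / w i := (div_le_div_iff_of_pos_right (hw i)).mpr hsum
    | succ t ih =>
      intro h
      have ht : t < Sj.card := Nat.lt_of_succ_lt h
      have H := ih ht
      have hc1 : C t ≤ C (t+1) := hCmono t (t+1) (Nat.le_succ t) h
      have hVsplit : ∑ r ∈ Finset.Ico 1 (t+1+1), V r
          = (∑ r ∈ Finset.Ico 1 (t+1), V r) + V (t+1) :=
        Finset.sum_Ico_succ_top (by omega) _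
      have hsplit : ∑ p ∈ Finset.range (C (t+1)), Y p
          = (∑ p ∈ Finset.range (C t), Y p) + ∑ p ∈ Finset.Ico (C t) (C (t+1)), Y p :=
        (Finset.sum_range_add_sum_Ico _ hc1).symm
      have hIco : ((C (t+1) : ℝ) - (C t : ℝ)) * M (t+1)
          ≤ ∑ p ∈ Finset.Ico (C t) (C (t+1)), Y p := by
        have := Finset.card_nsmul_le_sum (Finset.Ico (C t) (C (t+1))) Y (M (t+1))
          (fun p hp => hYM (t+1) h p (mem_Ico.mp hp).2)
        rw [Nat.card_Ico, nsmul_eq_mul, Nat.cast_sub hc1] at this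
        exact this
      have hVM1 : V (t+1) ≤ M (t+1) := hVM (t+1) (t+1) le_rfl h
      have hM1 : M (t+1) ≤ M t := hMant t
      have hD : (t : ℝ) / w j ≤ (C t : ℝ) / w i := hF1 t ht
      have h1 : ((C t : ℝ)/w i - (t:ℝ)/w j) * M (t+1)
          ≤ ((C t : ℝ)/w i - (t:ℝ)/w j) * M t :=
        mul_le_mul_of_nonneg_left hM1 (by linarith)
      have h2 : V (t+1) / w j ≤ M (t+1) / w j := (div_le_div_iff_of_pos_right (hw j)).mpr hVM1
      have h3 : ((C (t+1) : ℝ) - (C t : ℝ)) * M (t+1) / w i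
          ≤ (∑ p ∈ Finset.Ico (C t) (C (t+1)), Y p) / w i := (div_le_div_iff_of_pos_right (hw i)).mpr hIco
      rw [hVsplit, hsplit]
      rw [add_div, add_div]
      push_cast
      ring_nf at H h1 h2 h3 ⊢
      linarith
  -- final assembly
  have hYp : ∀ p : Fin Si.card, Y (p : ℕ) = u i (item ((σ p : ↥Si) : Fin m)) := by
    intro p
    rw [hY]; dsimp only; rw [dif_pos p.isLt]
  have hVp : ∀ r : Fin Sj.card, V (r : ℕ) = u i (item ((e r : ↥Sj) : Fin m)) := by
    intro r
    rw [hV]; dsimp only; rw [dif_pos r.isLt]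
  have hsum_i : (∑ g' ∈ runBundle picker item i, u i g') = ∑ p ∈ Finset.range Si.card, Y p := by
    rw [hRBi, Finset.sum_image (fun a _ b _ hab => hrun.item_inj hab)]
    rw [← Finset.sum_coe_sort Si (fun s => u i (item s))]
    rw [← Equiv.sum_comp σ.toEquiv (fun x : ↥Si => u i (item (x : Fin m)))]
    rw [← Fin.sum_univ_eq_sum_range Y Si.card]
    exact Finset.sum_congr rfl fun p _ => (hYp p).symm
  have hsum_j : (∑ g' ∈ runBundle picker item j, u i g') = ∑ r ∈ Finset.range Sj.card, V r := by
    rw [hRBj, Finset.sum_image (fun a _ b _ hab => hrun.item_inj hab)]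
    rw [← Finset.sum_coe_sort Sj (fun s => u i (item s))]
    rw [← Equiv.sum_comp e.toEquiv (fun x : ↥Sj => u i (item (x : Fin m)))]
    rw [← Fin.sum_univ_eq_sum_range V Sj.card]
    exact Finset.sum_congr rfl fun r _ => (hVp r).symm
  refine ⟨item ((e ⟨0, hk0⟩ : ↥Sj) : Fin m), ?_, ?_⟩
  · rw [hRBj]; exact mem_image_of_mem item (e ⟨0, hk0⟩).2
  · have hg0 : item ((e ⟨0, hk0⟩ : ↥Sj) : Fin m) ∈ runBundle picker item j := by
      rw [hRBj]; exact mem_image_of_mem item (e ⟨0, hk0⟩).2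
    have herase : ∑ g' ∈ (runBundle picker item j).erase (item ((e ⟨0, hk0⟩ : ↥Sj) : Fin m)),
        u i g' = ∑ r ∈ Finset.Ico 1 Sj.card, V r := by
      rw [Finset.sum_erase_eq_sub hg0, hsum_j]
      have h1 : ∑ r ∈ Finset.range Sj.card, V r = V 0 + ∑ r ∈ Finset.Ico 1 Sj.card, V r := by
        rw [Finset.range_eq_Ico, Finset.sum_eq_sum_Ico_succ_bot hk0]
      have h2 : V 0 = u i (item ((e ⟨0, hk0⟩ : ↥Sj) : Fin m)) := by
        rw [hV]; dsimp only; rw [dif_pos hk0]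
      rw [h1, h2]; ring
    rw [herase, hsum_i]
    have hkey := key (Sj.card - 1) (by omega)
    have hco : Sj.card - 1 + 1 = Sj.card := by omega
    rw [hco] at hkey
    have hD : ((Sj.card - 1 : ℕ) : ℝ) / w j ≤ (C (Sj.card - 1) : ℝ) / w i :=
      hF1 _ (by omega)
    have hMn : 0 ≤ M (Sj.card - 1) := hM0 _
    have hDM : 0 ≤ ((C (Sj.card - 1) : ℝ) / w i - ((Sj.card - 1 : ℕ) : ℝ) / w j)
        * M (Sj.card - 1) := mul_nonneg (by linarith) hMn
    have step1 : (∑ r ∈ Finset.Ico 1 Sj.card, V r) / w j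
        ≤ (∑ p ∈ Finset.range (C (Sj.card - 1)), Y p) / w i := by linarith
    have step2 : (∑ p ∈ Finset.range (C (Sj.card - 1)), Y p) ≤ ∑ p ∈ Finset.range Si.card, Y p :=
      Finset.sum_le_sum_of_subset_of_nonneg (Finset.range_mono (hCT _))
        (fun p _ _ => hY0 p)
    calc (∑ r ∈ Finset.Ico 1 Sj.card, V r) / w j
        ≤ (∑ p ∈ Finset.range (C (Sj.card - 1)), Y p) / w i := step1
      _ ≤ (∑ p ∈ Finset.range Si.card, Y p) / w i := (div_le_div_iff_of_pos_right (hw i)).mpr step2
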